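/- Let n ≥ 3 be an integer, κ1, κ2, κ3, κ₋₁ > 0 and κ₋ = 0, and let (p, q, r) be the global solution of the ODE system with admissible initial data (p0, q0, r0) ∈ (0,∞)³. Then p(t) → p∞ and s(t) := n r(t) − p(t) − 2 q(t) → s∞ as t → ∞, where s∞ := (n−2) κ2 / (2 κ3) and p∞ := κ1 s∞ / (κ2 + κ₋₁ + κ3 s∞). -/

import Mathlib

open Set Filter

lemma stay_le {f f' : ℝ → ℝ} {t0 B : ℝ}
    (hf : ∀ t ∈ Ici t0, HasDerivAt f (f' t) t)
    (h0 : f t0 ≤ B)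
    (hpush : ∀ t ∈ Ici t0, B ≤ f t → f' t < 0) :
    ∀ t ∈ Ici t0, f t ≤ B := by
  intro t1 ht1
  by_contra hgt
  push_neg at hgt
  have hcont : ContinuousOn f (Icc t0 t1) := fun x hx =>
    ((hf x (mem_Ici.2 hx.1)).continuousAt).continuousWithinAt
  have ht01 : t0 < t1 := by
    rcases eq_or_lt_of_le (mem_Ici.1 ht1) with h | h
    · exact absurd hgt (by rw [← h]; exact not_lt.2 h0)
    · exact h
  set A : Set ℝ := Icc t0 t1 ∩ f ⁻¹' (Iic B) with hA
  have hAne : A.Nonempty := ⟨t0, ⟨le_refl _, le_of_lt ht01⟩, by simpa using h0⟩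
  have hAclosed : IsClosed A :=
    hcont.preimage_isClosed_of_isClosed isClosed_Icc isClosed_Iic
  have hAcomp : IsCompact A := isCompact_Icc.of_isClosed_subset hAclosed inter_subset_left
  have hbdd : BddAbove A := hAcomp.bddAbove
  obtain ⟨hcIcc', hfc'⟩ := hAcomp.sSup_mem hAne
  generalize hcdef : sSup A = c at *
  have hcIcc : c ∈ Icc t0 t1 := hcIcc'
  have hfc : f c ≤ B := hfc'
  have hct1 : c < t1 := lt_of_le_of_ne hcIcc.2 (by rintro rfl; exact absurd hfc (not_le.2 hgt))
  -- on (c, t1], f > B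
  have hmid : ∀ x ∈ Ioc c t1, B < f x := by
    intro x hx
    by_contra hxB
    push_neg at hxB
    have : x ∈ A := ⟨⟨le_trans hcIcc.1 hx.1.le, hx.2⟩, by simpa using hxB⟩
    rw [← hcdef] at hx
    exact absurd (le_csSup hbdd this) (not_le.2 hx.1)
  -- f strict anti on [c, t1]
  have hanti : StrictAntiOn f (Icc c t1) := by
    apply strictAntiOn_of_deriv_neg (convex_Icc c t1)
      (hcont.mono (Icc_subset_Icc hcIcc.1 le_rfl))
    intro x hx
    rw [interior_Icc] at hx
    have hx' : x ∈ Ici t0 := mem_Ici.2 (le_trans hcIcc.1 hx.1.le)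
    rw [(hf x hx').deriv]
    exact hpush x hx' (le_of_lt (hmid x ⟨hx.1, hx.2.le⟩))
  have : f t1 < f c := hanti ⟨le_rfl, hct1.le⟩ ⟨hct1.le, le_rfl⟩ hct1
  linarith

/-- If `f ≥ L` on `[t0,∞)` and `f' ≤ -c < 0` whenever `f ≥ B`, then `f` eventually
reaches `≤ B`. -/
lemma enter_le {f f' : ℝ → ℝ} {t0 B L c : ℝ} (hc : 0 < c)
    (hf : ∀ t ∈ Ici t0, HasDerivAt f (f' t) t)
    (hlow : ∀ t ∈ Ici t0, L ≤ f t)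
    (hpush : ∀ t ∈ Ici t0, B ≤ f t → f' t ≤ -c) :
    ∃ t1 ∈ Ici t0, f t1 ≤ B := by
  by_contra hno
  push_neg at hno
  have hfB : ∀ t ∈ Ici t0, B < f t := hno
  set g : ℝ → ℝ := fun t => f t + c * t with hg
  have hganti : AntitoneOn g (Ici t0) := by
    apply antitoneOn_of_deriv_nonpos (convex_Ici t0)
    · exact fun x hx => (((hf x hx).add ((hasDerivAt_id x).const_mul c)).continuousAt).continuousWithinAt
    · intro x hx
      rw [interior_Ici] at hx
      exact (((hf x (mem_Ici.2 (le_of_lt hx))).add ((hasDerivAt_id x).const_mul c)).differentiableAt).differentiableWithinAt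
    · intro x hx
      rw [interior_Ici] at hx
      have hx' : x ∈ Ici t0 := mem_Ici.2 (le_of_lt hx)
      have := (hf x hx').add ((hasDerivAt_id x).const_mul c)
      rw [(show HasDerivAt g (f' x + c) x from this.congr_deriv (by simp)).deriv]
      have := hpush x hx' (le_of_lt (hfB x hx'))
      linarith
  set t1 := t0 + (f t0 + c * t0 - L - c * t0) / c + 1 with ht1
  have ht1ge : t0 ≤ t1 := by
    have h1 : L ≤ f t0 := hlow t0 (mem_Ici.2 le_rfl)
    have : 0 ≤ (f t0 - L) / c := div_nonneg (by linarith) hc.le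
    rw [ht1]; ring_nf; ring_nf at this ⊢; nlinarith [this]
  have := hganti (mem_Ici.2 le_rfl) (mem_Ici.2 ht1ge) ht1ge
  have hlow1 := hlow t1 (mem_Ici.2 ht1ge)
  rw [hg] at this
  simp only at this
  rw [ht1] at this hlow1
  have hc' := hc.ne'
  field_simp at this hlow1
  nlinarith [hc]

lemma no_first_touch {f g A B : ℝ → ℝ} {t0 τ M ε : ℝ}
    (ht0τ : t0 < τ) (hM : 1 ≤ M) (hε : 0 < ε)
    (hf : HasDerivAt f (A τ * f τ + B τ * g τ) τ)
    (hAbd : |A τ| ≤ M) (hBbd : |B τ| ≤ M) (hB0 : 0 ≤ B τ)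
    (hfpos : ∀ t ∈ Ioo t0 τ, 0 < f t + ε * Real.exp (3*M*(t - t0)))
    (hfτ : f τ + ε * Real.exp (3*M*(τ - t0)) = 0)
    (hgτ : 0 ≤ g τ + ε * Real.exp (3*M*(τ - t0))) :
    False := by
  set φ : ℝ → ℝ := fun t => ε * Real.exp (3*M*(t - t0)) with hφ
  have hφd : ∀ t : ℝ, HasDerivAt φ (ε * (3*M * Real.exp (3*M*(t - t0)))) t := by
    intro t
    have h1 : HasDerivAt (fun t : ℝ => 3*M*(t - t0)) (3*M) t := by
      simpa using (((hasDerivAt_id t).sub_const t0).const_mul (3*M))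
    have h2 := (Real.hasDerivAt_exp (3*M*(t - t0))).comp t h1
    have h3 := h2.const_mul ε
    exact h3.congr_deriv (by ring)
  set fε : ℝ → ℝ := fun t => f t + φ t with hfε
  have hd : HasDerivAt fε (A τ * f τ + B τ * g τ + ε * (3*M * Real.exp (3*M*(τ - t0)))) τ :=
    hf.add (hφd τ)
  set E := Real.exp (3*M*(τ - t0)) with hE
  have hEpos : 0 < E := Real.exp_pos _
  have hεE : 0 < ε * E := mul_pos hε hEpos
  have hdpos : 0 < A τ * f τ + B τ * g τ + ε * (3*M * E) := by
    have hfτ' : f τ = -(ε * E) := by linarith [hfτ]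
    have h1 : A τ * f τ ≥ -(M * (ε * E)) := by
      have : |A τ * f τ| ≤ M * (ε * E) := by
        rw [abs_mul, hfτ', abs_neg, abs_of_pos hεE]
        exact mul_le_mul_of_nonneg_right hAbd hεE.le
      linarith [neg_abs_le (A τ * f τ)]
    have h2 : B τ * g τ ≥ -(M * (ε * E)) := by
      have hg' : -(ε * E) ≤ g τ := by linarith [hgτ]
      have hBM : B τ ≤ M := le_trans (le_abs_self _) hBbd
      have h3 := mul_le_mul_of_nonneg_left hg' hB0
      have h4 := mul_le_mul_of_nonneg_right hBM hεE.le
      nlinarith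
    have hMεE : 0 < M * (ε * E) := mul_pos (lt_of_lt_of_le zero_lt_one hM) hεE
    nlinarith
  have hle : A τ * f τ + B τ * g τ + ε * (3*M * E) ≤ 0 := by
    have hdw : HasDerivWithinAt fε (A τ * f τ + B τ * g τ + ε * (3*M * E)) (Iio τ) τ :=
      hd.hasDerivWithinAt
    rw [hasDerivWithinAt_iff_tendsto_slope] at hdw
    have hset : Iio τ \ {τ} = Iio τ := Set.diff_singleton_eq_self (by simp)
    rw [hset] at hdw
    refine le_of_tendsto hdw ?_
    filter_upwards [Ioo_mem_nhdsLT_of_mem (⟨ht0τ, le_rfl⟩ : τ ∈ Ioc t0 τ)] with y hy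
    have hnum : 0 < fε y := hfpos y hy
    have hfετ : fε τ = 0 := hfτ
    rw [slope_def_field]
    apply div_nonpos_of_nonneg_of_nonpos
    · rw [hfετ]; linarith
    · linarith [hy.2]
  linarith
lemma quadrant {f g A B C D : ℝ → ℝ} {t0 : ℝ}
    (hf : ∀ t ∈ Ici t0, HasDerivAt f (A t * f t + B t * g t) t)
    (hg : ∀ t ∈ Ici t0, HasDerivAt g (C t * g t + D t * f t) t)
    (hAc : ContinuousOn A (Ici t0)) (hBc : ContinuousOn B (Ici t0))
    (hCc : ContinuousOn C (Ici t0)) (hDc : ContinuousOn D (Ici t0))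
    (hB0 : ∀ t ∈ Ici t0, 0 ≤ B t) (hD0 : ∀ t ∈ Ici t0, 0 ≤ D t)
    (hf0 : 0 ≤ f t0) (hg0 : 0 ≤ g t0) :
    ∀ t ∈ Ici t0, 0 ≤ f t ∧ 0 ≤ g t := by
  intro t1 ht1
  rcases eq_or_lt_of_le (mem_Ici.1 ht1) with rfl | ht01
  · exact ⟨hf0, hg0⟩
  have hIccsub : Icc t0 t1 ⊆ Ici t0 := fun x hx => hx.1
  -- bound M
  obtain ⟨MA, hMA⟩ := isCompact_Icc.exists_bound_of_continuousOn (hAc.mono hIccsub)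
  obtain ⟨MB, hMB⟩ := isCompact_Icc.exists_bound_of_continuousOn (hBc.mono hIccsub)
  obtain ⟨MC, hMC⟩ := isCompact_Icc.exists_bound_of_continuousOn (hCc.mono hIccsub)
  obtain ⟨MD, hMD⟩ := isCompact_Icc.exists_bound_of_continuousOn (hDc.mono hIccsub)
  set M := max 1 (max (max MA MB) (max MC MD)) with hM
  have hM1 : 1 ≤ M := le_max_left _ _
  have hMA' : ∀ x ∈ Icc t0 t1, |A x| ≤ M := fun x hx => le_trans (hMA x hx)
    (le_trans (le_max_left MA MB) (le_trans (le_max_left _ _) (le_max_right _ _)))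
  have hMB' : ∀ x ∈ Icc t0 t1, |B x| ≤ M := fun x hx => le_trans (hMB x hx)
    (le_trans (le_max_right MA MB) (le_trans (le_max_left _ _) (le_max_right _ _)))
  have hMC' : ∀ x ∈ Icc t0 t1, |C x| ≤ M := fun x hx => le_trans (hMC x hx)
    (le_trans (le_max_left MC MD) (le_trans (le_max_right _ _) (le_max_right _ _)))
  have hMD' : ∀ x ∈ Icc t0 t1, |D x| ≤ M := fun x hx => le_trans (hMD x hx)
    (le_trans (le_max_right MC MD) (le_trans (le_max_right _ _) (le_max_right _ _)))
  have hfc : ContinuousOn f (Icc t0 t1) := fun x hx =>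
    ((hf x (hIccsub hx)).continuousAt).continuousWithinAt
  have hgc : ContinuousOn g (Icc t0 t1) := fun x hx =>
    ((hg x (hIccsub hx)).continuousAt).continuousWithinAt
  -- key claim
  have key : ∀ ε > 0, ∀ t ∈ Icc t0 t1,
      0 < f t + ε * Real.exp (3*M*(t - t0)) ∧ 0 < g t + ε * Real.exp (3*M*(t - t0)) := by
    intro ε hε
    by_contra hbad
    push_neg at hbad
    set φ : ℝ → ℝ := fun t => ε * Real.exp (3*M*(t - t0)) with hφ
    have hφc : Continuous φ :=
      continuous_const.mul (Real.continuous_exp.comp (continuous_const.mul (continuous_id.sub continuous_const)))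
    have hφpos : ∀ t, 0 < φ t := fun t => mul_pos hε (Real.exp_pos _)
    set K : Set ℝ := {t ∈ Icc t0 t1 | f t + φ t ≤ 0 ∨ g t + φ t ≤ 0} with hK
    have hKne : K.Nonempty := by
      obtain ⟨t, ht, htbad⟩ := hbad
      refine ⟨t, ht, ?_⟩
      by_cases h1 : 0 < f t + φ t
      · exact Or.inr (htbad h1)
      · exact Or.inl (not_lt.1 h1)
    have hKclosed : IsClosed K := by
      have h1 : K = (Icc t0 t1 ∩ (fun t => f t + φ t) ⁻¹' Iic 0) ∪
          (Icc t0 t1 ∩ (fun t => g t + φ t) ⁻¹' Iic 0) := by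
        ext x; simp [hK]; tauto
      rw [h1]
      exact ((hfc.add (hφc.continuousOn)).preimage_isClosed_of_isClosed isClosed_Icc
        isClosed_Iic).union ((hgc.add (hφc.continuousOn)).preimage_isClosed_of_isClosed
        isClosed_Icc isClosed_Iic)
    have hKcomp : IsCompact K := isCompact_Icc.of_isClosed_subset hKclosed (sep_subset _ _)
    have hτK := hKcomp.sInf_mem hKne
    set τ := sInf K with hτ
    have hτIcc : τ ∈ Icc t0 t1 := hτK.1
    have hτ0 : t0 < τ := by
      rcases eq_or_lt_of_le hτIcc.1 with h | h
      · exfalso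
        rcases hτK.2 with h2 | h2 <;> rw [← h] at h2 <;>
          [linarith [hφpos t0, hf0]; linarith [hφpos t0, hg0]]
      · exact h
    have hbefore : ∀ t ∈ Ico t0 τ, 0 < f t + φ t ∧ 0 < g t + φ t := by
      intro t ht
      have htK : t ∉ K := fun hmem => absurd (csInf_le hKcomp.bddBelow hmem) (not_le.2 ht.2)
      have htIcc : t ∈ Icc t0 t1 := ⟨ht.1, le_trans ht.2.le hτIcc.2⟩
      by_contra hcon
      apply htK
      refine ⟨htIcc, ?_⟩
      rcases not_and_or.1 hcon with h | h
      · exact Or.inl (not_lt.1 h)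
      · exact Or.inr (not_lt.1 h)
    -- boundary values at τ by continuity from the left
    have hlim : ∀ h : ℝ → ℝ, ContinuousAt h τ →
        (∀ t ∈ Ico t0 τ, 0 < h t + φ t) → 0 ≤ h τ + φ τ := by
      intro h hhc hpos
      have hcont : ContinuousAt (fun t => h t + φ t) τ := hhc.add hφc.continuousAt
      have : Tendsto (fun t => h t + φ t) (nhdsWithin τ (Iio τ)) (nhds (h τ + φ τ)) :=
        hcont.continuousWithinAt.tendsto
      refine ge_of_tendsto this ?_
      filter_upwards [Ioo_mem_nhdsLT_of_mem (⟨hτ0, le_rfl⟩ : τ ∈ Ioc t0 τ)] with y hy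
      exact (hpos y ⟨hy.1.le, hy.2⟩).le
    have hτIci : τ ∈ Ici t0 := hIccsub hτIcc
    have hfτ0 : 0 ≤ f τ + φ τ :=
      hlim f (hf τ hτIci).continuousAt (fun t ht => (hbefore t ht).1)
    have hgτ0 : 0 ≤ g τ + φ τ :=
      hlim g (hg τ hτIci).continuousAt (fun t ht => (hbefore t ht).2)
    rcases hτK.2 with hc | hc
    · exact no_first_touch hτ0 hM1 hε (hf τ hτIci) (hMA' τ hτIcc) (hMB' τ hτIcc)
        (hB0 τ hτIci) (fun t ht => (hbefore t ⟨ht.1.le, ht.2⟩).1) (le_antisymm hc hfτ0) hgτ0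
    · exact no_first_touch hτ0 hM1 hε (hg τ hτIci) (hMC' τ hτIcc) (hMD' τ hτIcc)
        (hD0 τ hτIci) (fun t ht => (hbefore t ⟨ht.1.le, ht.2⟩).2) (le_antisymm hc hgτ0) hfτ0
  -- conclude
  have conclude : ∀ h : ℝ → ℝ,
      (∀ ε > 0, ∀ t ∈ Icc t0 t1, 0 < h t + ε * Real.exp (3*M*(t - t0))) → 0 ≤ h t1 := by
    intro h hx
    by_contra hcon
    push_neg at hcon
    have hE : (0:ℝ) < Real.exp (3*M*(t1 - t0)) := Real.exp_pos _
    have hε : 0 < -h t1 / (2 * Real.exp (3*M*(t1 - t0))) :=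
      div_pos (neg_pos.2 hcon) (by positivity)
    have h1 := hx _ hε t1 ⟨ht01.le, le_rfl⟩
    have h2 : -h t1 / (2 * Real.exp (3*M*(t1 - t0))) * Real.exp (3*M*(t1 - t0))
        = -h t1 / 2 := by field_simp
    rw [h2] at h1
    linarith
  exact ⟨conclude f (fun ε hε t ht => (key ε hε t ht).1),
    conclude g (fun ε hε t ht => (key ε hε t ht).2)⟩

lemma exp_deriv_aux (M t0 t : ℝ) :
    HasDerivAt (fun t => Real.exp (M * (t - t0))) (M * Real.exp (M * (t - t0))) t := by
  have h1 : HasDerivAt (fun t : ℝ => M * (t - t0)) M t := by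
    simpa using (((hasDerivAt_id t).sub_const t0).const_mul M)
  have h2 := (Real.hasDerivAt_exp (M * (t - t0))).comp t h1
  exact h2.congr_deriv (by ring)

lemma pos_persist {f A R : ℝ → ℝ} {t0 : ℝ}
    (hf : ∀ t ∈ Ici t0, HasDerivAt f (A t * f t + R t) t)
    (hAc : ContinuousOn A (Ici t0))
    (hfnn : ∀ t ∈ Ici t0, 0 ≤ f t) (hR : ∀ t ∈ Ici t0, 0 ≤ R t)
    (hf0 : 0 < f t0) : ∀ t ∈ Ici t0, 0 < f t := by
  intro t1 ht1
  rcases eq_or_lt_of_le (mem_Ici.1 ht1) with rfl | ht01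
  · exact hf0
  have hIccsub : Icc t0 t1 ⊆ Ici t0 := fun x hx => hx.1
  obtain ⟨M, hMb⟩ := isCompact_Icc.exists_bound_of_continuousOn (hAc.mono hIccsub)
  set h : ℝ → ℝ := fun t => f t * Real.exp (M * (t - t0)) with hh
  have hd : ∀ t ∈ Icc t0 t1, HasDerivAt h
      ((A t * f t + R t) * Real.exp (M * (t - t0)) + f t * (M * Real.exp (M * (t - t0)))) t :=
    fun t ht => (hf t (hIccsub ht)).mul (exp_deriv_aux M t0 t)
  have hmono : MonotoneOn h (Icc t0 t1) := by
    apply monotoneOn_of_deriv_nonneg (convex_Icc t0 t1)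
    · exact fun x hx => ((hd x hx).continuousAt).continuousWithinAt
    · intro x hx
      rw [interior_Icc] at hx
      exact ((hd x ⟨hx.1.le, hx.2.le⟩).differentiableAt).differentiableWithinAt
    · intro x hx
      rw [interior_Icc] at hx
      have hx' : x ∈ Icc t0 t1 := ⟨hx.1.le, hx.2.le⟩
      rw [(hd x hx').deriv]
      have hA : -M ≤ A x := by
        have := hMb x hx'
        rw [Real.norm_eq_abs] at this
        linarith [neg_abs_le (A x)]
      have hfx := hfnn x (hIccsub hx')
      have hRx := hR x (hIccsub hx')
      have hE : (0:ℝ) < Real.exp (M * (x - t0)) := Real.exp_pos _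
      have h1 : 0 ≤ (A x + M) * f x := mul_nonneg (by linarith) hfx
      nlinarith
  have := hmono ⟨le_rfl, ht01.le⟩ ⟨ht01.le, le_rfl⟩ ht01.le
  rw [hh] at this
  simp only at this
  rw [sub_self, mul_zero, Real.exp_zero, mul_one] at this
  have hE : (0:ℝ) < Real.exp (M * (t1 - t0)) := Real.exp_pos _
  nlinarith

/-- Monotone and bounded above on a ray implies convergence. -/
lemma tendsto_of_monoOn {f : ℝ → ℝ} {T Bd : ℝ}
    (hm : MonotoneOn f (Ici T)) (hb : ∀ t ∈ Ici T, f t ≤ Bd) :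
    ∃ L, Filter.Tendsto f Filter.atTop (nhds L) := by
  set g : ℝ → ℝ := fun t => f (max t T) with hg
  have hgm : Monotone g := fun x y hxy =>
    hm (mem_Ici.2 (le_max_right x T)) (mem_Ici.2 (le_max_right y T))
      (max_le_max hxy le_rfl)
  have hgb : BddAbove (Set.range g) := by
    refine ⟨Bd, ?_⟩
    rintro _ ⟨t, rfl⟩
    exact hb _ (mem_Ici.2 (le_max_right t T))
  refine ⟨⨆ t, g t, ?_⟩
  have hgt := tendsto_atTop_ciSup hgm hgb
  apply hgt.congr'
  filter_upwards [eventually_ge_atTop T] with t ht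
  rw [hg]; simp only [max_eq_left ht]

lemma tendsto_of_antiOn {f : ℝ → ℝ} {T Bd : ℝ}
    (hm : AntitoneOn f (Ici T)) (hb : ∀ t ∈ Ici T, Bd ≤ f t) :
    ∃ L, Filter.Tendsto f Filter.atTop (nhds L) := by
  have hm' : MonotoneOn (fun t => -f t) (Ici T) := fun x hx y hy hxy => by
    simpa using hm hx hy hxy
  obtain ⟨L, hL⟩ := tendsto_of_monoOn (Bd := -Bd) hm' (fun t ht => by simpa using hb t ht)
  exact ⟨-L, by simpa using hL.neg⟩

/-- If `f` converges and `f'` converges, then `f' → 0`. -/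
lemma deriv_lim_zero {f d : ℝ → ℝ} {T L c : ℝ}
    (hf : ∀ t ∈ Ici T, HasDerivAt f (d t) t)
    (hL : Filter.Tendsto f Filter.atTop (nhds L))
    (hc : Filter.Tendsto d Filter.atTop (nhds c)) : c = 0 := by
  by_contra hc0
  have habs : 0 < |c| := abs_pos.2 hc0
  have h1 : ∀ᶠ t in atTop, |d t - c| < |c| / 4 := by
    have := Metric.tendsto_nhds.1 hc (|c|/4) (by linarith)
    simpa [Real.dist_eq] using this
  have h2 : ∀ᶠ t in atTop, |f t - L| < |c| / 16 := by
    have := Metric.tendsto_nhds.1 hL (|c|/16) (by linarith)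
    simpa [Real.dist_eq] using this
  have h3 : ∀ᶠ t in atTop, T ≤ t := eventually_ge_atTop T
  obtain ⟨T', hT'⟩ := ((h1.and (h2.and h3)).and
    ((eventually_ge_atTop (T+0)).mono fun t ht => ht)).exists_forall_of_atTop
  have hT'T : T ≤ T' := ((hT' T' le_rfl).1.2.2)
  have hcont : ContinuousOn f (Icc T' (T'+1)) := fun x hx =>
    ((hf x (mem_Ici.2 (le_trans hT'T hx.1))).continuousAt).continuousWithinAt
  obtain ⟨ξ, hξmem, hξ⟩ := exists_hasDerivAt_eq_slope f d (by linarith : T' < T'+1) hcont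
    (fun x hx => hf x (mem_Ici.2 (le_trans hT'T hx.1.le)))
  have hξT : T' ≤ ξ := hξmem.1.le
  have hd1 := (hT' ξ hξT).1.1
  have hfa := (hT' T' le_rfl).1.2.1
  have hfb := (hT' (T'+1) (by linarith)).1.2.1
  rw [show T' + 1 - T' = 1 by ring, div_one] at hξ
  have hdle : |d ξ| ≤ |f (T'+1) - L| + |f T' - L| := by
    rw [hξ]
    have h4 : f (T'+1) - f T' = (f (T'+1) - L) - (f T' - L) := by ring
    rw [h4]
    exact abs_sub _ _
  have hge : |c| - |c|/4 ≤ |d ξ| := by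
    have := abs_sub_abs_le_abs_sub c (d ξ)
    rw [abs_sub_comm c (d ξ)] at this
    linarith
  linarith
/-- Monotonicity from nonnegative derivative on a ray. -/
lemma monoOn_of_deriv {f d : ℝ → ℝ} {T : ℝ}
    (hf : ∀ t ∈ Ici T, HasDerivAt f (d t) t) (hd : ∀ t ∈ Ici T, 0 ≤ d t) :
    MonotoneOn f (Ici T) := by
  apply monotoneOn_of_deriv_nonneg (convex_Ici T)
  · exact fun x hx => ((hf x hx).continuousAt).continuousWithinAt
  · intro x hx
    rw [interior_Ici] at hx
    exact ((hf x (mem_Ici.2 hx.le)).differentiableAt).differentiableWithinAt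
  · intro x hx
    rw [interior_Ici] at hx
    rw [(hf x (mem_Ici.2 hx.le)).deriv]
    exact hd x (mem_Ici.2 hx.le)

lemma antiOn_of_deriv {f d : ℝ → ℝ} {T : ℝ}
    (hf : ∀ t ∈ Ici T, HasDerivAt f (d t) t) (hd : ∀ t ∈ Ici T, d t ≤ 0) :
    AntitoneOn f (Ici T) := by
  apply antitoneOn_of_deriv_nonpos (convex_Ici T)
  · exact fun x hx => ((hf x hx).continuousAt).continuousWithinAt
  · intro x hx
    rw [interior_Ici] at hx
    exact ((hf x (mem_Ici.2 hx.le)).differentiableAt).differentiableWithinAt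
  · intro x hx
    rw [interior_Ici] at hx
    rw [(hf x (mem_Ici.2 hx.le)).deriv]
    exact hd x (mem_Ici.2 hx.le)

set_option maxHeartbeats 4000000 in
/-- Case `κ₋ = 0`: convergence of `p(t)` and `s(t) = n r(t) - p(t) - 2 q(t)` as `t → ∞`. -/
theorem stmt_15 (n : ℕ) (hn : 3 ≤ n) (k1 k2 k3 km1 : ℝ)
    (hk1 : 0 < k1) (hk2 : 0 < k2) (hk3 : 0 < k3) (hkm1 : 0 < km1)
    (p0 q0 r0 : ℝ) (hp0 : 0 < p0) (hq0 : 0 < q0) (hr0 : 0 < r0)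
    (hadm1 : 0 ≤ (n : ℝ) * r0 - p0 - 2 * q0) (hadm2 : r0 ≤ q0)
    (p q r : ℝ → ℝ)
    (hinit : p 0 = p0 ∧ q 0 = q0 ∧ r 0 = r0)
    (hode : ∀ t, 0 ≤ t →
      HasDerivAt p ((k1 - k3 * p t) * ((n : ℝ) * r t - p t - 2 * q t)
        - (k2 + km1) * p t) t ∧
      HasDerivAt q (k2 * p t + k3 * p t * ((n : ℝ) * r t - p t - 2 * q t)) t ∧
      HasDerivAt r (k2 * p t) t)
    (sinf pinf : ℝ)
    (hsinf : sinf = ((n : ℝ) - 2) * k2 / (2 * k3))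
    (hpinf : pinf = k1 * sinf / (k2 + km1 + k3 * sinf)) :
    Filter.Tendsto (fun t => p t) Filter.atTop (nhds pinf) ∧
    Filter.Tendsto (fun t => (n : ℝ) * r t - p t - 2 * q t) Filter.atTop (nhds sinf) := by
  obtain ⟨hp00, hq00, hr00⟩ := hinit
  have hN : (3:ℝ) ≤ (n:ℝ) := by exact_mod_cast hn
  set a := k2 + km1 with ha
  set b := ((n:ℝ)-1)*k2 + km1 with hb
  have hA : 0 < a := by rw [ha]; linarith
  have hBpos : 0 < b := by rw [hb]; nlinarith
  have hab : a < b := by rw [ha, hb]; nlinarith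
  set s : ℝ → ℝ := fun t => (n : ℝ) * r t - p t - 2 * q t with hsdef
  set u : ℝ → ℝ := fun t => k1 * s t - k3 * (p t * s t) - a * p t with hu
  set v : ℝ → ℝ := fun t => b * p t - k1 * s t - k3 * (p t * s t) with hv
  have hsapp : ∀ t, s t = (n : ℝ) * r t - p t - 2 * q t := fun t => rfl
  have huapp : ∀ t, u t = k1 * s t - k3 * (p t * s t) - a * p t := fun t => rfl
  have hvapp : ∀ t, v t = b * p t - k1 * s t - k3 * (p t * s t) := fun t => rfl
  clear_value a b s u v
  -- derivative facts
  have hp' : ∀ t ∈ Ici (0:ℝ), HasDerivAt p (u t) t := by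
    intro t ht
    have h := (hode t ht).1
    rw [huapp t]
    simp only [hsapp]
    convert h using 1
    rw [ha]; ring
  have hs' : ∀ t ∈ Ici (0:ℝ), HasDerivAt s (v t) t := by
    intro t ht
    obtain ⟨hp1, hq1, hr1⟩ := hode t ht
    have h := ((hr1.const_mul ((n:ℝ))).sub hp1).sub (hq1.const_mul 2)
    rw [hvapp t, hsdef]
    simp only [hsapp]
    exact h.congr_deriv (by rw [hb, ha]; ring)
  have hpcont : ContinuousOn p (Ici (0:ℝ)) := fun x hx =>
    ((hp' x hx).continuousAt).continuousWithinAt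
  have hscont : ContinuousOn s (Ici (0:ℝ)) := fun x hx =>
    ((hs' x hx).continuousAt).continuousWithinAt
  -- nonnegativity of p and s
  have hpos : ∀ t ∈ Ici (0:ℝ), 0 ≤ p t ∧ 0 ≤ s t := by
    apply quadrant (A := fun t => -(k3 * s t) - a) (B := fun _ => k1)
      (C := fun t => -(k1 + k3 * p t)) (D := fun _ => b)
    · intro t ht
      convert hp' t ht using 1
      rw [huapp t]; ring
    · intro t ht
      convert hs' t ht using 1
      rw [hvapp t]; ring
    · exact ((continuousOn_const.mul hscont).neg).sub continuousOn_const
    · exact continuousOn_const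
    · exact ((continuousOn_const.add (continuousOn_const.mul hpcont))).neg
    · exact continuousOn_const
    · exact fun t _ => hk1.le
    · exact fun t _ => hBpos.le
    · rw [hp00]; exact hp0.le
    · rw [hsapp 0, hp00, hq00, hr00]; exact hadm1
  -- strict positivity of p
  have hppos : ∀ t ∈ Ici (0:ℝ), 0 < p t := by
    apply pos_persist (A := fun t => -(k3 * s t) - a) (R := fun t => k1 * s t)
    · intro t ht
      convert hp' t ht using 1
      rw [hu]; ring
    · exact ((continuousOn_const.mul hscont).neg).sub continuousOn_const
    · exact fun t ht => (hpos t ht).1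
    · exact fun t ht => mul_nonneg hk1.le (hpos t ht).2
    · rw [hp00]; exact hp0
  -- p eventually enters and stays below k1/k3
  have hpush1 : ∀ t ∈ Ici (0:ℝ), k1/k3 ≤ p t → u t ≤ -(a * (k1/k3)) := by
    intro t ht hpt
    have h1 := (hpos t ht).2
    have h2 : k1 - k3 * p t ≤ 0 := by
      rw [div_le_iff₀ hk3] at hpt; linarith
    rw [huapp t]
    have h3 : (k1 - k3 * p t) * s t ≤ 0 := mul_nonpos_of_nonpos_of_nonneg h2 h1
    have h4 : a * (k1/k3) ≤ a * p t := mul_le_mul_of_nonneg_left hpt hA.le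
    nlinarith
  obtain ⟨ta, hta0, htaen⟩ := enter_le (c := a * (k1/k3))
    (mul_pos hA (div_pos hk1 hk3)) hp' (fun t ht => (hpos t ht).1) hpush1
  have hple : ∀ t ∈ Ici ta, p t ≤ k1/k3 := by
    apply stay_le (fun t ht => hp' t (mem_Ici.2 (le_trans (mem_Ici.1 hta0) (mem_Ici.1 ht)))) htaen
    intro t ht hpt
    have := hpush1 t (mem_Ici.2 (le_trans (mem_Ici.1 hta0) (mem_Ici.1 ht))) hpt
    nlinarith [mul_pos hA (div_pos hk1 hk3)]
  -- s eventually enters and stays below b/k3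
  have hpush2 : ∀ t ∈ Ici ta, b/k3 ≤ s t → v t ≤ -(k1 * (b/k3)) := by
    intro t ht hst
    have htIci : t ∈ Ici (0:ℝ) := mem_Ici.2 (le_trans (mem_Ici.1 hta0) (mem_Ici.1 ht))
    have hp1 := (hpos t htIci).1
    have hp2 := hple t ht
    rw [hvapp t]
    have h5 : k3 * (p t * s t) ≥ k3 * (p t * (b/k3)) := by
      have : p t * (b/k3) ≤ p t * s t := mul_le_mul_of_nonneg_left hst hp1
      nlinarith
    have h6 : k1 * s t ≥ k1 * (b/k3) := mul_le_mul_of_nonneg_left hst hk1.le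
    have h7 : k3 * (p t * (b/k3)) = b * p t := by field_simp
    nlinarith
  obtain ⟨tb, htba, htben⟩ := enter_le (c := k1 * (b/k3))
    (mul_pos hk1 (div_pos hBpos hk3))
    (fun t ht => hs' t (mem_Ici.2 (le_trans (mem_Ici.1 hta0) (mem_Ici.1 ht))))
    (fun t ht => (hpos t (mem_Ici.2 (le_trans (mem_Ici.1 hta0) (mem_Ici.1 ht)))).2) hpush2
  have hsle : ∀ t ∈ Ici tb, s t ≤ b/k3 := by
    apply stay_le (fun t ht => hs' t (mem_Ici.2 (le_trans (mem_Ici.1 hta0) (le_trans (mem_Ici.1 htba) (mem_Ici.1 ht))))) htben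
    intro t ht hst
    have := hpush2 t (mem_Ici.2 (le_trans (mem_Ici.1 htba) (mem_Ici.1 ht))) hst
    nlinarith [mul_pos hk1 (div_pos hBpos hk3)]
  have htb0 : (0:ℝ) ≤ tb := le_trans hta0 htba
  -- derivatives of u and v
  have hu' : ∀ t ∈ Ici (0:ℝ), HasDerivAt u ((-(k3 * s t) - a) * u t + (k1 - k3 * p t) * v t) t := by
    intro t ht
    have h := (((hs' t ht).const_mul k1).sub
      (((hp' t ht).mul (hs' t ht)).const_mul k3)).sub ((hp' t ht).const_mul a)
    have h2 := h.congr_of_eventuallyEq (Filter.Eventually.of_forall fun x => huapp x)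
    exact h2.congr_deriv (by ring)
  have hv' : ∀ t ∈ Ici (0:ℝ), HasDerivAt v ((-(k1 + k3 * p t)) * v t + (b - k3 * s t) * u t) t := by
    intro t ht
    have h := (((hp' t ht).const_mul b).sub ((hs' t ht).const_mul k1)).sub
      (((hp' t ht).mul (hs' t ht)).const_mul k3)
    have h2 := h.congr_of_eventuallyEq (Filter.Eventually.of_forall fun x => hvapp x)
    exact h2.congr_deriv (by ring)
  have hucont : ContinuousOn u (Ici (0:ℝ)) := fun x hx =>
    ((hu' x hx).continuousAt).continuousWithinAt
  have hvcont : ContinuousOn v (Ici (0:ℝ)) := fun x hx =>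
    ((hv' x hx).continuousAt).continuousWithinAt
  have hB2 : ∀ t ∈ Ici tb, 0 ≤ k1 - k3 * p t := by
    intro t ht
    have h := hple t (mem_Ici.2 (le_trans (mem_Ici.1 htba) (mem_Ici.1 ht)))
    rw [le_div_iff₀ hk3] at h
    nlinarith
  have hD2 : ∀ t ∈ Ici tb, 0 ≤ b - k3 * s t := by
    intro t ht
    have h := hsle t ht
    rw [le_div_iff₀ hk3] at h
    nlinarith
  -- quadrant invariance for (u,v)
  have quadpp : ∀ t1, tb ≤ t1 → 0 ≤ u t1 → 0 ≤ v t1 → ∀ t ∈ Ici t1, 0 ≤ u t ∧ 0 ≤ v t := by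
    intro t1 ht1 hu1 hv1
    have hsub : Ici t1 ⊆ Ici (0:ℝ) := fun x hx => le_trans (le_trans htb0 ht1) hx
    have hsub2 : Ici t1 ⊆ Ici tb := fun x hx => le_trans ht1 hx
    apply quadrant (A := fun t => -(k3 * s t) - a) (B := fun t => k1 - k3 * p t)
      (C := fun t => -(k1 + k3 * p t)) (D := fun t => b - k3 * s t)
    · exact fun t ht => hu' t (hsub ht)
    · exact fun t ht => hv' t (hsub ht)
    · exact ((continuousOn_const.mul (hscont.mono hsub)).neg).sub continuousOn_const
    · exact continuousOn_const.sub (continuousOn_const.mul (hpcont.mono hsub))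
    · exact ((continuousOn_const.add (continuousOn_const.mul (hpcont.mono hsub)))).neg
    · exact continuousOn_const.sub (continuousOn_const.mul (hscont.mono hsub))
    · exact fun t ht => hB2 t (hsub2 ht)
    · exact fun t ht => hD2 t (hsub2 ht)
    · exact hu1
    · exact hv1
  have quadnn : ∀ t1, tb ≤ t1 → u t1 ≤ 0 → v t1 ≤ 0 → ∀ t ∈ Ici t1, u t ≤ 0 ∧ v t ≤ 0 := by
    intro t1 ht1 hu1 hv1
    have hsub : Ici t1 ⊆ Ici (0:ℝ) := fun x hx => le_trans (le_trans htb0 ht1) hx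
    have hsub2 : Ici t1 ⊆ Ici tb := fun x hx => le_trans ht1 hx
    have key := quadrant (f := fun t => -u t) (g := fun t => -v t)
      (A := fun t => -(k3 * s t) - a) (B := fun t => k1 - k3 * p t)
      (C := fun t => -(k1 + k3 * p t)) (D := fun t => b - k3 * s t) (t0 := t1)
      (by intro t ht
          have h := (hu' t (hsub ht)).neg
          exact h.congr_deriv (by ring))
      (by intro t ht
          have h := (hv' t (hsub ht)).neg
          exact h.congr_deriv (by ring))
      (((continuousOn_const.mul (hscont.mono hsub)).neg).sub continuousOn_const)
      (continuousOn_const.sub (continuousOn_const.mul (hpcont.mono hsub)))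
      (((continuousOn_const.add (continuousOn_const.mul (hpcont.mono hsub)))).neg)
      (continuousOn_const.sub (continuousOn_const.mul (hscont.mono hsub)))
      (fun t ht => hB2 t (hsub2 ht))
      (fun t ht => hD2 t (hsub2 ht))
      (by simpa using hu1) (by simpa using hv1)
    intro t ht
    obtain ⟨h1, h2⟩ := key t ht
    constructor <;> linarith
  -- eventual monotonicity
  have hmono : ∃ T1, tb ≤ T1 ∧
      (MonotoneOn p (Ici T1) ∨ AntitoneOn p (Ici T1)) ∧
      (MonotoneOn s (Ici T1) ∨ AntitoneOn s (Ici T1)) := by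
    by_cases hc1 : ∃ t1, tb ≤ t1 ∧ 0 ≤ u t1 ∧ 0 ≤ v t1
    · obtain ⟨t1, ht1, hu1, hv1⟩ := hc1
      have hq := quadpp t1 ht1 hu1 hv1
      have hsub : Ici t1 ⊆ Ici (0:ℝ) := fun x hx => le_trans (le_trans htb0 ht1) hx
      exact ⟨t1, ht1,
        Or.inl (monoOn_of_deriv (fun t ht => hp' t (hsub ht)) (fun t ht => (hq t ht).1)),
        Or.inl (monoOn_of_deriv (fun t ht => hs' t (hsub ht)) (fun t ht => (hq t ht).2))⟩
    by_cases hc2 : ∃ t1, tb ≤ t1 ∧ u t1 ≤ 0 ∧ v t1 ≤ 0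
    · obtain ⟨t1, ht1, hu1, hv1⟩ := hc2
      have hq := quadnn t1 ht1 hu1 hv1
      have hsub : Ici t1 ⊆ Ici (0:ℝ) := fun x hx => le_trans (le_trans htb0 ht1) hx
      exact ⟨t1, ht1,
        Or.inr (antiOn_of_deriv (fun t ht => hp' t (hsub ht)) (fun t ht => (hq t ht).1)),
        Or.inr (antiOn_of_deriv (fun t ht => hs' t (hsub ht)) (fun t ht => (hq t ht).2))⟩
    push_neg at hc1 hc2
    have htri : ∀ t, tb ≤ t → (0 < u t ∧ v t < 0) ∨ (u t < 0 ∧ 0 < v t) := by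
      intro t ht
      rcases lt_trichotomy (u t) 0 with h | h | h
      · exact Or.inr ⟨h, hc2 t ht h.le⟩
      · exfalso
        have h1 := hc1 t ht (le_of_eq h.symm)
        have h2 := hc2 t ht (le_of_eq h)
        linarith
      · exact Or.inl ⟨h, hc1 t ht h.le⟩
    have hsub : Ici tb ⊆ Ici (0:ℝ) := fun x hx => le_trans htb0 hx
    rcases htri tb le_rfl with ⟨hu0, hv0⟩ | ⟨hu0, hv0⟩
    · have hsign : ∀ t ∈ Ici tb, 0 ≤ u t := by
        intro t2 ht2
        by_contra hle
        push_neg at hle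
        have hcont : ContinuousOn u (Icc tb t2) := hucont.mono (fun x hx => le_trans htb0 hx.1)
        have h0mem : (0:ℝ) ∈ Icc (u t2) (u tb) := ⟨hle.le, hu0.le⟩
        obtain ⟨τ, hτmem, hτ⟩ := intermediate_value_Icc' ht2 hcont h0mem
        rcases htri τ hτmem.1 with ⟨h, _⟩ | ⟨h, _⟩ <;> linarith
      have hvneg : ∀ t ∈ Ici tb, v t ≤ 0 := by
        intro t ht
        rcases htri t ht with ⟨_, h⟩ | ⟨h, _⟩
        · exact h.le
        · linarith [hsign t ht]
      exact ⟨tb, le_rfl,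
        Or.inl (monoOn_of_deriv (fun t ht => hp' t (hsub ht)) hsign),
        Or.inr (antiOn_of_deriv (fun t ht => hs' t (hsub ht)) hvneg)⟩
    · have hsign : ∀ t ∈ Ici tb, u t ≤ 0 := by
        intro t2 ht2
        by_contra hle
        push_neg at hle
        have hcont : ContinuousOn u (Icc tb t2) := hucont.mono (fun x hx => le_trans htb0 hx.1)
        have h0mem : (0:ℝ) ∈ Icc (u tb) (u t2) := ⟨hu0.le, hle.le⟩
        obtain ⟨τ, hτmem, hτ⟩ := intermediate_value_Icc ht2 hcont h0mem
        rcases htri τ hτmem.1 with ⟨h, _⟩ | ⟨h, _⟩ <;> linarith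
      have hvpos : ∀ t ∈ Ici tb, 0 ≤ v t := by
        intro t ht
        rcases htri t ht with ⟨h, _⟩ | ⟨_, h⟩
        · linarith [hsign t ht]
        · exact h.le
      exact ⟨tb, le_rfl,
        Or.inr (antiOn_of_deriv (fun t ht => hp' t (hsub ht)) hsign),
        Or.inl (monoOn_of_deriv (fun t ht => hs' t (hsub ht)) hvpos)⟩
  obtain ⟨T1, hT1b, hpm, hsm⟩ := hmono
  have hT10 : (0:ℝ) ≤ T1 := le_trans htb0 hT1b
  have hsubT1 : Ici T1 ⊆ Ici (0:ℝ) := fun x hx => le_trans hT10 hx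
  -- limits exist
  obtain ⟨Lp, hLp⟩ : ∃ L, Filter.Tendsto p Filter.atTop (nhds L) := by
    rcases hpm with h | h
    · exact tendsto_of_monoOn h (fun t ht => hple t (le_trans htba (le_trans hT1b ht)))
    · exact tendsto_of_antiOn h (fun t ht => (hpos t (hsubT1 ht)).1)
  obtain ⟨Ls, hLs⟩ : ∃ L, Filter.Tendsto s Filter.atTop (nhds L) := by
    rcases hsm with h | h
    · exact tendsto_of_monoOn h (fun t ht => hsle t (le_trans hT1b ht))
    · exact tendsto_of_antiOn h (fun t ht => (hpos t (hsubT1 ht)).2)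
  have hLp0 : 0 ≤ Lp := by
    refine ge_of_tendsto hLp ?_
    filter_upwards [eventually_ge_atTop (0:ℝ)] with t ht
    exact (hpos t ht).1
  have hLs0 : 0 ≤ Ls := by
    refine ge_of_tendsto hLs ?_
    filter_upwards [eventually_ge_atTop (0:ℝ)] with t ht
    exact (hpos t ht).2
  -- limits of the derivatives vanish
  have hut : Filter.Tendsto u Filter.atTop (nhds (k1 * Ls - k3 * (Lp * Ls) - a * Lp)) := by
    have h := ((hLs.const_mul k1).sub ((hLp.mul hLs).const_mul k3)).sub (hLp.const_mul a)
    exact Filter.Tendsto.congr (fun t => (huapp t).symm) h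
  have hvt : Filter.Tendsto v Filter.atTop (nhds (b * Lp - k1 * Ls - k3 * (Lp * Ls))) := by
    have h := ((hLp.const_mul b).sub ((hLs.const_mul k1))).sub ((hLp.mul hLs).const_mul k3)
    exact Filter.Tendsto.congr (fun t => (hvapp t).symm) h
  have hueq : k1 * Ls - k3 * (Lp * Ls) - a * Lp = 0 := deriv_lim_zero hp' hLp hut
  have hveq : b * Lp - k1 * Ls - k3 * (Lp * Ls) = 0 := deriv_lim_zero hs' hLs hvt
  by_cases hLpz : Lp = 0
  · exfalso
    have hk1Ls : k1 * Ls = 0 := by rw [hLpz] at hveq; linear_combination -hveq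
    have hLsz : Ls = 0 := by
      rcases mul_eq_zero.1 hk1Ls with h | h
      · exact absurd h hk1.ne'
      · exact h
    -- find the unstable eigenvalue lam > 0
    have hφc : ContinuousOn (fun x : ℝ => (x + a) * (x + k1)) (Icc 0 b) :=
      ((continuous_id.add continuous_const).mul (continuous_id.add continuous_const)).continuousOn
    have hmem : b * k1 ∈ Icc ((0 + a) * (0 + k1)) ((b + a) * (b + k1)) :=
      ⟨by linarith [mul_le_mul_of_nonneg_right hab.le hk1.le],
       by linarith [mul_pos hBpos hBpos, mul_pos hA hBpos, mul_pos hA hk1]⟩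
    obtain ⟨lam, hlamIcc, hlam⟩ := intermediate_value_Icc hBpos.le hφc hmem
    simp only at hlam
    have hlampos : 0 < lam := by
      rcases eq_or_lt_of_le hlamIcc.1 with h | h
      · exfalso; rw [← h] at hlam
        linarith [mul_lt_mul_of_pos_right hab hk1]
      · exact h
    obtain ⟨W, hWapp⟩ : ∃ W : ℝ → ℝ, ∀ t, W t = (lam + k1) * p t + k1 * s t :=
      ⟨_, fun t => rfl⟩
    have hW' : ∀ t ∈ Ici (0:ℝ), HasDerivAt W ((lam + k1) * u t + k1 * v t) t := by
      intro t ht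
      have h := ((hp' t ht).const_mul (lam + k1)).add ((hs' t ht).const_mul k1)
      exact h.congr_of_eventuallyEq (Filter.Eventually.of_forall fun x => hWapp x)
    have hid : ∀ t, (lam + k1) * u t + k1 * v t
        = lam * W t - k3 * ((lam + k1) + k1) * (p t * s t) := by
      intro t
      rw [huapp t, hvapp t, hWapp t]
      linear_combination -(p t) * hlam
    have hCpos : 0 < 2 * k3 * ((lam + k1) + k1) :=
      mul_pos (mul_pos two_pos hk3) (by linarith)
    set δ := lam * (lam + k1) / (2 * k3 * ((lam + k1) + k1)) with hδ
    have hδpos : 0 < δ := div_pos (mul_pos hlampos (by linarith)) hCpos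
    have hδeq : 2 * k3 * ((lam + k1) + k1) * δ = lam * (lam + k1) := by
      rw [hδ]; field_simp
    have hLs' := hLs
    rw [hLsz] at hLs'
    have hev : ∀ᶠ t in Filter.atTop, s t ≤ δ := by
      have h := Metric.tendsto_nhds.1 hLs' δ hδpos
      filter_upwards [h] with t ht
      rw [Real.dist_eq, sub_zero] at ht
      calc s t ≤ |s t| := le_abs_self _
        _ ≤ δ := ht.le
    obtain ⟨T2, hT2⟩ := (hev.and (Filter.eventually_ge_atTop (0:ℝ))).exists_forall_of_atTop
    have hT20 : (0:ℝ) ≤ T2 := (hT2 T2 le_rfl).2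
    have hWmono : MonotoneOn W (Ici T2) := by
      apply monoOn_of_deriv (fun t ht => hW' t (le_trans hT20 ht))
      intro t ht
      rw [hid t, hWapp t]
      have hsδ : s t ≤ δ := (hT2 t ht).1
      have hpt := (hpos t (le_trans hT20 ht)).1
      have hst := (hpos t (le_trans hT20 ht)).2
      have hnn : 0 ≤ k3 * ((lam + k1) + k1) := by linarith
      have hkey : k3 * ((lam + k1) + k1) * (p t * s t) ≤ lam * (lam + k1) * p t / 2 := by
        have h1 : k3 * ((lam + k1) + k1) * (p t * s t) ≤ k3 * ((lam + k1) + k1) * (p t * δ) :=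
          mul_le_mul_of_nonneg_left (mul_le_mul_of_nonneg_left hsδ hpt) hnn
        have h2 : k3 * ((lam + k1) + k1) * (p t * δ) = lam * (lam + k1) * p t / 2 := by
          linear_combination (p t / 2) * hδeq
        linarith
      have e1 : 0 ≤ lam * (k1 * s t) := mul_nonneg hlampos.le (mul_nonneg hk1.le hst)
      have e2 : 0 ≤ lam * ((lam + k1) * p t) :=
        mul_nonneg hlampos.le (mul_nonneg (by linarith) hpt)
      have e3 : lam * ((lam + k1) * p t + k1 * s t)
          = lam * ((lam + k1) * p t) + lam * (k1 * s t) := by ring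
      have e4 : lam * ((lam + k1) * p t) = lam * (lam + k1) * p t := by ring
      linarith
    have hWT2pos : 0 < W T2 := by
      rw [hWapp]
      have h1 := hppos T2 hT20
      have h2 := (hpos T2 hT20).2
      linarith [mul_pos (show (0:ℝ) < lam + k1 by linarith) h1, mul_nonneg hk1.le h2]
    have hWlim : Filter.Tendsto W Filter.atTop (nhds 0) := by
      have h := (hLp.const_mul (lam + k1)).add (hLs.const_mul k1)
      have h2 := Filter.Tendsto.congr (fun t => (hWapp t).symm) h
      rw [hLpz, hLsz] at h2
      simpa using h2
    have hcontra : W T2 ≤ 0 := by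
      refine ge_of_tendsto hWlim ?_
      filter_upwards [Filter.eventually_ge_atTop T2] with t ht
      exact hWmono (mem_Ici.2 le_rfl) (mem_Ici.2 ht) ht
    linarith
  · have hLppos : 0 < Lp := lt_of_le_of_ne hLp0 (Ne.symm hLpz)
    have key2 : Lp * (b - a - 2 * (k3 * Ls)) = 0 := by linear_combination hueq + hveq
    have hfz : b - a - 2 * (k3 * Ls) = 0 := by
      rcases mul_eq_zero.1 key2 with h | h
      · exact absurd h hLpz
      · exact h
    rw [hb, ha] at hfz
    have hLs_eq : Ls = sinf := by
      rw [hsinf]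
      field_simp
      linarith
    have hsinfpos : 0 < sinf := by
      rw [hsinf]
      apply div_pos ?_ (by linarith)
      have : (0:ℝ) < (n:ℝ) - 2 := by linarith
      exact mul_pos this hk2
    have hLp_eq : Lp = pinf := by
      have hden : 0 < a + k3 * sinf := by linarith [mul_pos hk3 hsinfpos]
      rw [hpinf, eq_div_iff (ne_of_gt hden), ← hLs_eq]
      linear_combination -hueq
    constructor
    · rw [← hLp_eq]; exact hLp
    · rw [← hLs_eq]; exact hLs
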